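/- Let F3 = {S_3}. Then c_k(F3) = g_k(F3) = 2k + 1 for every positive integer k. In particular, F3 is k-nice for every positive integer k. -/

import Mathlib

set_option maxHeartbeats 1000000


open SimpleGraph

/-- A monochromatic copy of `H` in `G` under the edge `k`-coloring `col`:
an injective map sending edges of `H` to edges of `G`, all of the same color. -/
def HasMonoCopy {V : Type*} {W : Type*} {k : ℕ} (G : SimpleGraph V)
    (col : Sym2 V → Fin k) (H : SimpleGraph W) : Prop :=
  ∃ (i : Fin k) (f : W ↪ V), ∀ a b : W, H.Adj a b →
    G.Adj (f a) (f b) ∧ col s(f a, f b) = i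

/-- A family of graphs. -/
abbrev GraphFam : Type 1 := Set ((W : Type) × SimpleGraph W)

/-- The coloring `col` of (the edges of) `G` contains no monochromatic copy of
any member of the family `F`. -/
def AvoidsFam {V : Type} {k : ℕ} (G : SimpleGraph V)
    (col : Sym2 V → Fin k) (F : GraphFam) : Prop :=
  ∀ H ∈ F, ¬ HasMonoCopy G col H.2

/-- The set of integers `s` such that the complete graph `K_s` admits a
`k`-coloring of its edges with no monochromatic copy of any member of `F`.
`c_k(F)` is the greatest element of this set. -/
def cSet (k : ℕ) (F : GraphFam) : Set ℕ :=
  {s | ∃ col : Sym2 (Fin s) → Fin k,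
    AvoidsFam (⊤ : SimpleGraph (Fin s)) col F}

/-- The set of integers `s` such that some finite graph `G` with chromatic number `s`
admits a `k`-coloring of its edges with no monochromatic copy of any member of `F`.
`g_k(F)` is the greatest element of this set. -/
def gSet (k : ℕ) (F : GraphFam) : Set ℕ :=
  {s | ∃ (V : Type) (_ : Fintype V) (G : SimpleGraph V)
    (col : Sym2 V → Fin k), G.chromaticNumber = (s : ℕ∞) ∧ AvoidsFam G col F}

/-- The family `F₃ = {S₃}`, where `S₃ = K_{1,3}`. -/
def F3 : GraphFam :=
  {⟨Fin 1 ⊕ Fin 3, completeBipartiteGraph (Fin 1) (Fin 3)⟩}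

/-- Greedy coloring: a finite graph all of whose vertices have at most `d`
neighbors is `(d+1)`-colorable. -/
lemma greedy_colorable (n : ℕ) : ∀ (V : Type) (_ : Fintype V) (_ : DecidableEq V)
    (G : SimpleGraph V) (_ : DecidableRel G.Adj) (d : ℕ),
    Fintype.card V = n →
    (∀ v : V, (Finset.univ.filter (fun w => G.Adj v w)).card ≤ d) →
    G.Colorable (d + 1) := by
  induction n with
  | zero =>
    intro V _ _ G _ d hcard _
    haveI : IsEmpty V := Fintype.card_eq_zero_iff.mp hcard
    exact Colorable.of_isEmpty (G := G) _
  | succ n ih =>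
    intro V _ _ G _ d hcard hdeg
    have hne : Nonempty V := Fintype.card_pos_iff.mp (by omega)
    obtain ⟨v⟩ := hne
    let V' := {w : V // w ≠ v}
    let G' : SimpleGraph V' := G.comap (fun w => w.1)
    haveI : DecidableRel G'.Adj := fun a b => (‹DecidableRel G.Adj› a.1 b.1 :)
    have hcard' : Fintype.card V' = n := by
      have h1 : Fintype.card {w : V // w = v} = 1 := Fintype.card_subtype_eq v
      have := Fintype.card_subtype_compl (fun w : V => w = v)
      simp only [h1, hcard] at this
      simpa [V'] using this
    have hdeg' : ∀ a : V', (Finset.univ.filter (fun w => G'.Adj a w)).card ≤ d := by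
      intro a
      refine le_trans (Finset.card_le_card_of_injOn (fun w => w.1) ?_ ?_) (hdeg a.1)
      · intro w hw
        simp only [Finset.coe_filter, Finset.mem_filter, Finset.mem_univ, true_and] at hw ⊢
        exact hw
      · intro x _ y _ hxy
        exact Subtype.ext hxy
    obtain ⟨C⟩ := ih V' inferInstance inferInstance G' inferInstance d hcard' hdeg'
    -- colors used by neighbors of v
    let used : Finset (Fin (d + 1)) :=
      Finset.image (fun w : V' => C w) (Finset.univ.filter (fun w : V' => G.Adj v w.1))
    have hused : used.card ≤ d := by
      refine le_trans Finset.card_image_le ?_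
      refine le_trans (Finset.card_le_card_of_injOn (fun w => w.1) ?_ ?_) (hdeg v)
      · intro w hw
        simp only [Finset.coe_filter, Finset.mem_filter, Finset.mem_univ, true_and] at hw ⊢
        exact hw
      · intro x _ y _ hxy
        exact Subtype.ext hxy
    have hcompl : usedᶜ.Nonempty := by
      rw [← Finset.card_pos, Finset.card_compl]
      simp only [Fintype.card_fin]
      omega
    obtain ⟨i, hi⟩ := hcompl
    rw [Finset.mem_compl] at hi
    refine ⟨SimpleGraph.Coloring.mk
      (fun w => if h : w = v then i else C ⟨w, h⟩) ?_⟩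
    intro a b hab
    split_ifs with ha hb hb
    · rw [ha, hb] at hab; exact absurd hab (G.loopless.irrefl v)
    · intro h
      apply hi
      refine Finset.mem_image.mpr ⟨⟨b, hb⟩, ?_, h.symm⟩
      simp only [Finset.mem_filter, Finset.mem_univ, true_and]
      rw [ha] at hab; exact hab
    · intro h
      apply hi
      refine Finset.mem_image.mpr ⟨⟨a, ha⟩, ?_, h⟩
      simp only [Finset.mem_filter, Finset.mem_univ, true_and]
      rw [hb] at hab; exact hab.symm
    · exact C.valid (by exact hab)

/-- If the coloring avoids `F3`, no vertex has three distinct neighbors joined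
to it by edges of the same color. -/
lemma mono_of_three {V : Type} {k : ℕ} {G : SimpleGraph V} {col : Sym2 V → Fin k}
    (hav : AvoidsFam G col F3) {v a b c : V} {i : Fin k}
    (hab : a ≠ b) (hac : a ≠ c) (hbc : b ≠ c)
    (ha : G.Adj v a) (hb : G.Adj v b) (hc : G.Adj v c)
    (ca : col s(v, a) = i) (cb : col s(v, b) = i) (cc : col s(v, c) = i) : False := by
  apply hav ⟨Fin 1 ⊕ Fin 3, completeBipartiteGraph (Fin 1) (Fin 3)⟩ rfl
  have hinj : Function.Injective (Sum.elim (fun _ : Fin 1 => v) (![a, b, c])) := by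
    rintro (x | x) (y | y) h
    · simp [Subsingleton.elim x y]
    · exfalso
      simp only [Sum.elim_inl, Sum.elim_inr] at h
      fin_cases y <;> simp_all [ha.ne, hb.ne, hc.ne]
    · exfalso
      simp only [Sum.elim_inl, Sum.elim_inr] at h
      fin_cases x <;> simp_all [ha.ne, hb.ne, hc.ne]
    · simp only [Sum.elim_inr] at h
      congr 1
      fin_cases x <;> fin_cases y <;> simp_all
  refine ⟨i, ⟨Sum.elim (fun _ : Fin 1 => v) (![a, b, c]), hinj⟩, ?_⟩
  rintro (x | x) (y | y) hadj
  · simp at hadj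
  · simp only [Function.Embedding.coeFn_mk, Sum.elim_inl, Sum.elim_inr]
    fin_cases y
    · exact ⟨ha, ca⟩
    · exact ⟨hb, cb⟩
    · exact ⟨hc, cc⟩
  · simp only [Function.Embedding.coeFn_mk, Sum.elim_inl, Sum.elim_inr]
    fin_cases x
    · exact ⟨ha.symm, by rw [Sym2.eq_swap]; exact ca⟩
    · exact ⟨hb.symm, by rw [Sym2.eq_swap]; exact cb⟩
    · exact ⟨hc.symm, by rw [Sym2.eq_swap]; exact cc⟩
  · simp at hadj

/-- If the coloring avoids `F3`, every vertex has at most `2k` neighbors. -/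
lemma nbrs_le_of_avoids {V : Type} [DecidableEq V] {k : ℕ} {G : SimpleGraph V}
    {col : Sym2 V → Fin k} (hav : AvoidsFam G col F3) (v : V) (T : Finset V)
    (hT : ∀ w ∈ T, G.Adj v w) : T.card ≤ 2 * k := by
  by_contra h
  push_neg at h
  obtain ⟨i, -, hi⟩ := Finset.exists_lt_card_fiber_of_mul_lt_card_of_maps_to
    (f := fun w => col s(v, w)) (s := T) (t := (Finset.univ : Finset (Fin k))) (n := 2)
    (fun a _ => Finset.mem_univ _) (by simp only [Finset.card_univ, Fintype.card_fin]; omega)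
  set S := T.filter (fun w => col s(v, w) = i) with hS
  obtain ⟨a, haS⟩ := Finset.card_pos.mp (show 0 < S.card by omega)
  have h2 : 1 < (S.erase a).card := by
    rw [Finset.card_erase_of_mem haS]; omega
  obtain ⟨b, hbS, c, hcS, hbc⟩ := Finset.one_lt_card.mp h2
  have hba := (Finset.mem_erase.mp hbS).1
  have hca := (Finset.mem_erase.mp hcS).1
  have hb' := Finset.mem_of_mem_erase hbS
  have hc' := Finset.mem_of_mem_erase hcS
  rw [hS, Finset.mem_filter] at haS hb' hc'
  exact mono_of_three hav (Ne.symm hba) (Ne.symm hca) hbc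
    (hT a haS.1) (hT b hb'.1) (hT c hc'.1) haS.2 hb'.2 hc'.2

/-- `c_k(F₃) = g_k(F₃) = 2k + 1` for every positive integer `k`;
in particular `F₃` is `k`-nice for every positive integer `k`. -/
theorem stmt2 :
    ∀ k : ℕ, 0 < k →
      IsGreatest (cSet k F3) (2 * k + 1) ∧ IsGreatest (gSet k F3) (2 * k + 1) := by
  intro k hk
  -- the explicit coloring of K_{2k+1}
  let col : Sym2 (Fin (2 * k + 1)) → Fin k := Sym2.lift
    ⟨fun a b => ⟨(min (max a.val b.val - min a.val b.val)
        (2 * k + 1 - (max a.val b.val - min a.val b.val)) - 1) % k, Nat.mod_lt _ hk⟩,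
     by intro a b; simp [Nat.max_comm, Nat.min_comm a.val b.val]⟩
  have hav : AvoidsFam (⊤ : SimpleGraph (Fin (2 * k + 1))) col F3 := by
    rintro H hH
    obtain rfl : H = ⟨Fin 1 ⊕ Fin 3, completeBipartiteGraph (Fin 1) (Fin 3)⟩ := hH
    rintro ⟨i, f, hf⟩
    have key : ∀ j : Fin 3,
        (min (max (f (Sum.inl 0)).val (f (Sum.inr j)).val
            - min (f (Sum.inl 0)).val (f (Sum.inr j)).val)
          (2 * k + 1 - (max (f (Sum.inl 0)).val (f (Sum.inr j)).val
            - min (f (Sum.inl 0)).val (f (Sum.inr j)).val)) - 1) = i.val ∧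
        (f (Sum.inl 0)).val ≠ (f (Sum.inr j)).val := by
      intro j
      have hadj : (completeBipartiteGraph (Fin 1) (Fin 3)).Adj (Sum.inl 0) (Sum.inr j) := by
        simp
      obtain ⟨h1, h2⟩ := hf (Sum.inl 0) (Sum.inr j) hadj
      have hne : (f (Sum.inl 0)).val ≠ (f (Sum.inr j)).val := by
        intro h
        exact h1.ne (Fin.val_injective h)
      have h2' := congrArg Fin.val h2
      simp only [col, Sym2.lift_mk] at h2'
      have hx := (f (Sum.inl 0)).is_lt
      have hy := (f (Sum.inr j)).is_lt
      rw [Nat.mod_eq_of_lt (by omega)] at h2'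
      exact ⟨h2', hne⟩
    have hne01 : (f (Sum.inr 0)).val ≠ (f (Sum.inr 1)).val := by
      intro h
      have := f.injective (Fin.val_injective h)
      simp at this
    have hne02 : (f (Sum.inr 0)).val ≠ (f (Sum.inr 2)).val := by
      intro h
      have := f.injective (Fin.val_injective h)
      simp at this
    have hne12 : (f (Sum.inr 1)).val ≠ (f (Sum.inr 2)).val := by
      intro h
      have := f.injective (Fin.val_injective h)
      simp at this
    obtain ⟨k0, n0⟩ := key 0
    obtain ⟨k1, n1⟩ := key 1
    obtain ⟨k2, n2⟩ := key 2
    have hx := (f (Sum.inl 0)).is_lt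
    have hy0 := (f (Sum.inr 0)).is_lt
    have hy1 := (f (Sum.inr 1)).is_lt
    have hy2 := (f (Sum.inr 2)).is_lt
    have hi := i.is_lt
    omega
  have hc : (2 * k + 1) ∈ cSet k F3 := ⟨col, hav⟩
  have hg : (2 * k + 1) ∈ gSet k F3 := by
    refine ⟨Fin (2 * k + 1), inferInstance, ⊤, col, ?_, hav⟩
    rw [SimpleGraph.chromaticNumber_top]
    simp
  constructor
  · refine ⟨hc, ?_⟩
    intro s hs
    obtain ⟨col', hav'⟩ := hs
    by_contra h
    push_neg at h
    have hv : 0 < s := by omega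
    let v : Fin s := ⟨0, hv⟩
    have := nbrs_le_of_avoids hav' v (Finset.univ.erase v) (by
      intro w hw
      have := (Finset.mem_erase.mp hw).1
      simp [this.symm, Ne.symm])
    rw [Finset.card_erase_of_mem (Finset.mem_univ v), Finset.card_univ,
      Fintype.card_fin] at this
    omega
  · refine ⟨hg, ?_⟩
    intro s hs
    obtain ⟨V, instF, G, col', hchi, hav'⟩ := hs
    letI := Classical.decEq V
    letI : DecidableRel G.Adj := Classical.decRel _
    have hdeg : ∀ v : V, (Finset.univ.filter (fun w => G.Adj v w)).card ≤ 2 * k := by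
      intro v
      exact nbrs_le_of_avoids hav' v _ (fun w hw => (Finset.mem_filter.mp hw).2)
    have hcol : G.Colorable (2 * k + 1) :=
      greedy_colorable (Fintype.card V) V inferInstance inferInstance G inferInstance
        (2 * k) rfl hdeg
    have := hcol.chromaticNumber_le
    rw [hchi] at this
    exact_mod_cast this
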